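/- A Cⁿ⁻¹ polynomial spline of degree n on a path graph with k+2 vertices and k+1 edges (knots at the interior vertices) that vanishes identically near both endpoint vertices must be the zero spline, provided k ≤ n+1. -/
import Mathlib


open Polynomial

open Finset

/-- Power sums up to order `n` vanishing at `k ≤ n+1` distinct points forces zero weights. -/
lemma powsum_aux {k n : ℕ} (hk : k ≤ n + 1) (b : Fin k → ℝ) (hb : Function.Injective b)
    (c : Fin k → ℝ) (h : ∀ m ≤ n, ∑ i, c i * b i ^ m = 0) : ∀ i, c i = 0 := by
  intro i0
  set Q : Polynomial ℝ := ∏ j ∈ univ.erase i0, (X - C (b j)) with hQdef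
  have hcard : (univ.erase i0).card = k - 1 := by
    rw [card_erase_of_mem (mem_univ _), card_univ, Fintype.card_fin]
  have hdeg : Q.natDegree < n + 1 := by
    have h2 : ∀ j ∈ univ.erase i0, (X - C (b j)).natDegree ≤ 1 := fun j _ =>
      (natDegree_X_sub_C (b j)).le
    calc Q.natDegree ≤ ∑ j ∈ univ.erase i0, (X - C (b j)).natDegree :=
        Polynomial.natDegree_prod_le (univ.erase i0) (fun j => X - C (b j))
      _ ≤ (univ.erase i0).card • 1 := Finset.sum_le_card_nsmul _ _ 1 h2
      _ = k - 1 := by rw [smul_eq_mul, mul_one, hcard]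
      _ < n + 1 := by omega
  have key : ∑ i, c i * Q.eval (b i) = 0 := by
    have he : ∀ i, Q.eval (b i) = ∑ m ∈ range (n + 1), Q.coeff m * b i ^ m := fun i =>
      eval_eq_sum_range' hdeg _
    calc ∑ i, c i * Q.eval (b i)
        = ∑ i, ∑ m ∈ range (n + 1), Q.coeff m * (c i * b i ^ m) := by
          refine Finset.sum_congr rfl fun i _ => ?_
          rw [he i, Finset.mul_sum]
          exact Finset.sum_congr rfl fun m _ => by ring
      _ = ∑ m ∈ range (n + 1), Q.coeff m * ∑ i, c i * b i ^ m := by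
          rw [Finset.sum_comm]
          exact Finset.sum_congr rfl fun m _ => by rw [Finset.mul_sum]
      _ = 0 := by
          refine Finset.sum_eq_zero fun m hm => ?_
          rw [h m (by simpa using Nat.lt_succ_iff.mp (mem_range.mp hm)), mul_zero]
  have hzero : ∀ i, i ≠ i0 → c i * Q.eval (b i) = 0 := by
    intro i hi
    have : Q.eval (b i) = 0 := by
      rw [hQdef, eval_prod]
      exact Finset.prod_eq_zero (Finset.mem_erase.mpr ⟨hi, mem_univ _⟩) (by simp)
    rw [this, mul_zero]
  have hsum : c i0 * Q.eval (b i0) = 0 := by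
    rw [← key]
    exact (Finset.sum_eq_single i0 (fun i _ hi => hzero i hi) (by simp)).symm
  have hQne : Q.eval (b i0) ≠ 0 := by
    rw [hQdef, eval_prod]
    refine Finset.prod_ne_zero_iff.mpr fun j hj => ?_
    have : b i0 ≠ b j := fun hbe => (Finset.mem_erase.mp hj).1 (hb hbe).symm
    simpa [sub_eq_zero] using this
  exact (mul_eq_zero.mp hsum).resolve_right hQne

/-- A sum of multiples of `(X - aᵢ)^n`, `k ≤ n+1` distinct points, equal to zero has zero
coefficients. -/
lemma indep_aux {k n : ℕ} (hk : k ≤ n + 1) (a : Fin k → ℝ) (ha : Function.Injective a)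
    (c : Fin k → ℝ) (h : ∑ i, C (c i) * (X - C (a i)) ^ n = 0) : ∀ i, c i = 0 := by
  have hps : ∀ m ≤ n, ∑ i, c i * (-a i) ^ m = 0 := by
    intro m hm
    have hco := congrArg (fun q : Polynomial ℝ => q.coeff (n - m)) h
    simp only [finset_sum_coeff, coeff_zero] at hco
    have hterm : ∀ i : Fin k, (C (c i) * (X - C (a i)) ^ n).coeff (n - m) =
        c i * (-a i) ^ m * (n.choose (n - m) : ℝ) := by
      intro i
      rw [coeff_C_mul, sub_eq_add_neg, ← C_neg, coeff_X_add_C_pow]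
      have : n - (n - m) = m := by omega
      rw [this]; ring
    rw [Finset.sum_congr rfl fun i _ => hterm i, ← Finset.sum_mul] at hco
    have hch : ((n.choose (n - m) : ℕ) : ℝ) ≠ 0 := by
      exact_mod_cast (Nat.choose_pos (by omega)).ne'
    exact (mul_eq_zero.mp hco).resolve_right hch
  exact powsum_aux hk (fun i => -a i) (fun i j hij => ha (neg_injective hij)) c hps

/-- Degree-`n` polynomial with vanishing derivatives up to order `n-1` at `a` is a multiple
of `(X - a)^n`. -/
lemma mult_aux {n : ℕ} (hn : 1 ≤ n) (q : Polynomial ℝ) (hdeg : q.natDegree ≤ n) (a : ℝ)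
    (h : ∀ m < n, (derivative^[m] q).eval a = 0) :
    ∃ c : ℝ, q = C c * (X - C a) ^ n := by
  by_cases hq : q = 0
  · exact ⟨0, by simp [hq]⟩
  have hlt : n - 1 < q.rootMultiplicity a :=
    lt_rootMultiplicity_of_isRoot_iterate_derivative hq fun m hm => h m (by omega)
  have hdvd : (X - C a) ^ n ∣ q := by
    rw [← le_rootMultiplicity_iff hq]; omega
  obtain ⟨r, hr⟩ := hdvd
  have hrne : r ≠ 0 := fun h0 => hq (by rw [hr, h0, mul_zero])
  have hnd : q.natDegree = n + r.natDegree := by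
    rw [hr, natDegree_mul (pow_ne_zero _ (X_sub_C_ne_zero a)) hrne,
      natDegree_pow, natDegree_X_sub_C, mul_one]
  have hr0 : r.natDegree = 0 := by omega
  exact ⟨r.coeff 0, by rw [hr, eq_C_of_natDegree_eq_zero hr0, coeff_C_zero]; ring⟩


/-- a `C^{n−1}` polynomial spline of degree `n` on a path graph with `k+2`
vertices and `k+1` edges (segments `[j, j+1]` for `j = 0, …, k`, knots at the `k` interior
vertices, with matching of derivatives up to order `n−1` at each knot) that vanishes
identically near both endpoints (i.e. is the zero polynomial on the first and last
segments) must be the zero spline, provided `k ≤ n+1`. -/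
theorem spline_vanishing_near_endpoints (n k : ℕ) (hn : 1 ≤ n) (hk : k ≤ n + 1)
    (p : Fin (k + 1) → Polynomial ℝ)
    (hdeg : ∀ j, (p j).natDegree ≤ n)
    (hsmooth : ∀ (j : Fin k) (m : ℕ), m < n →
      (Polynomial.derivative^[m] (p j.castSucc)).eval ((j : ℕ) + 1 : ℝ) =
        (Polynomial.derivative^[m] (p j.succ)).eval ((j : ℕ) + 1 : ℝ))
    (hfirst : p 0 = 0) (hlast : p (Fin.last k) = 0) :
    ∀ j, p j = 0 := by
  have hstep : ∀ j : Fin k, ∃ c : ℝ,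
      p j.succ - p j.castSucc = C c * (X - C ((j : ℕ) + 1 : ℝ)) ^ n := by
    intro j
    refine mult_aux hn _ ?_ _ ?_
    · exact le_trans (natDegree_sub_le _ _) (max_le (hdeg _) (hdeg _))
    · intro m hm
      rw [iterate_derivative_sub, eval_sub, hsmooth j m hm, sub_self]
  choose c hc using hstep
  have hrep : ∀ j : Fin (k + 1),
      p j = ∑ i ∈ univ.filter (fun i : Fin k => (i : ℕ) < (j : ℕ)),
        C (c i) * (X - C ((i : ℕ) + 1 : ℝ)) ^ n := by
    intro j
    induction j using Fin.induction with
    | zero => simpa using hfirst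
    | succ j ih =>
      have hps : p j.succ = p j.castSucc + C (c j) * (X - C ((j : ℕ) + 1 : ℝ)) ^ n := by
        have := hc j; linear_combination this
      have hfil : univ.filter (fun i : Fin k => (i : ℕ) < (j.succ : ℕ)) =
          insert j (univ.filter (fun i : Fin k => (i : ℕ) < (j.castSucc : ℕ))) := by
        ext i
        simp only [mem_filter, mem_univ, true_and, mem_insert, Fin.val_succ, Fin.coe_castSucc]
        constructor
        · intro hi
          rcases Nat.lt_succ_iff_lt_or_eq.mp hi with h | h
          · exact Or.inr h
          · exact Or.inl (Fin.ext h)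
        · rintro (rfl | h)
          · omega
          · omega
      have hnotmem : j ∉ univ.filter (fun i : Fin k => (i : ℕ) < (j.castSucc : ℕ)) := by
        simp
      rw [hps, ih, hfil, Finset.sum_insert hnotmem]
      ring
  have hc0 : ∀ i, c i = 0 := by
    have hL := hrep (Fin.last k)
    rw [hlast] at hL
    have hfil : univ.filter (fun i : Fin k => (i : ℕ) < ((Fin.last k : Fin (k+1)) : ℕ)) =
        univ := by
      ext i; simp [Fin.val_last, i.isLt]
    rw [hfil] at hL
    refine indep_aux hk (fun i : Fin k => ((i : ℕ) + 1 : ℝ)) ?_ c hL.symm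
    intro i j hij
    have h2 : ((i : ℕ) : ℝ) = ((j : ℕ) : ℝ) := by simpa using hij
    exact Fin.ext (Nat.cast_injective h2)
  intro j
  rw [hrep j]
  refine Finset.sum_eq_zero fun i _ => ?_
  rw [hc0 i, map_zero, zero_mul]
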